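/- Let ν = (ν_{ij}) be an N×N matrix with nonnegative entries that is primitive (some power of ν has all entries strictly positive). Then the modified harmonic-coupled Riccati equations P_i = A (∑_{j=1}^N l_{ij} P_j^{-1} + ν_{ij} C_jᵀ R_j^{-1} C_j)^{-1} Aᵀ + Q, i = 1, …, N, have a unique group of positive definite n×n solutions {P_i}_{i=1}^N. Moreover, for any positive definite initial matrices P_{1,0}, …, P_{N,0}, the iterates of the modified iterative law P_{i,k+1} = A (∑_{j=1}^N l_{ij} P_{j,k}^{-1} + ν_{ij} C_jᵀ R_j^{-1} C_j)^{-1} Aᵀ + Q converge entrywise to P_i as k → ∞, for every i ∈ {1, …, N}. -/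

import Mathlib

open Matrix Filter Topology

set_option linter.unusedSectionVars false
set_option linter.unusedVariables false

namespace HCRE

variable {d : Type*} [Fintype d] [DecidableEq d]

/-- Loewner order. -/
def pLE (X Y : Matrix d d ℝ) : Prop := (Y - X).PosSemidef

lemma herm_iff {X : Matrix d d ℝ} : X.IsHermitian ↔ Xᵀ = X := by
  rw [Matrix.IsHermitian, conjTranspose_eq_transpose_of_trivial]

lemma form_nonneg {X : Matrix d d ℝ} (h : X.PosSemidef) (x : d → ℝ) :
    0 ≤ x ⬝ᵥ X *ᵥ x := by simpa using h.dotProduct_mulVec_nonneg x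

lemma psd_of_forms {X : Matrix d d ℝ} (hherm : Xᵀ = X) (h : ∀ x, 0 ≤ x ⬝ᵥ X *ᵥ x) :
    X.PosSemidef := PosSemidef.of_dotProduct_mulVec_nonneg (herm_iff.2 hherm) fun x => by simpa using h x

lemma psd_zero : (0 : Matrix d d ℝ).PosSemidef := psd_of_forms (by simp) (by simp)

lemma psd_add {X Y : Matrix d d ℝ} (hX : X.PosSemidef) (hY : Y.PosSemidef) :
    (X + Y).PosSemidef :=
  psd_of_forms (by rw [transpose_add, herm_iff.1 hX.1, herm_iff.1 hY.1])
    (fun x => by rw [add_mulVec, dotProduct_add]; exact add_nonneg (form_nonneg hX x) (form_nonneg hY x))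

lemma psd_smul {X : Matrix d d ℝ} {c : ℝ} (hX : X.PosSemidef) (hc : 0 ≤ c) :
    (c • X).PosSemidef :=
  psd_of_forms (by rw [transpose_smul, herm_iff.1 hX.1])
    (fun x => by rw [smul_mulVec, dotProduct_smul]; exact mul_nonneg hc (form_nonneg hX x))

lemma psd_finset_sum {ι : Type*} (s : Finset ι) (f : ι → Matrix d d ℝ)
    (h : ∀ j ∈ s, (f j).PosSemidef) : (∑ j ∈ s, f j).PosSemidef := by
  classical
  induction s using Finset.induction_on with
  | empty => simpa using psd_zero
  | @insert a s' hnot ih =>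
    rw [Finset.sum_insert hnot]
    exact psd_add (h a (Finset.mem_insert_self a s'))
      (ih fun j hj => h j (Finset.mem_insert_of_mem hj))

lemma psd_conj {e : Type*} [Fintype e] {X : Matrix e e ℝ} (hX : X.PosSemidef)
    (B : Matrix d e ℝ) : (B * X * Bᵀ).PosSemidef := by
  have := hX.mul_mul_conjTranspose_same B
  rwa [conjTranspose_eq_transpose_of_trivial] at this

lemma posdef_of_forms {X : Matrix d d ℝ} (hherm : Xᵀ = X)
    (h : ∀ x, x ≠ 0 → 0 < x ⬝ᵥ X *ᵥ x) : X.PosDef :=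
  PosDef.of_dotProduct_mulVec_pos (herm_iff.2 hherm) fun x hx => by simpa using h x hx

lemma form_pos {X : Matrix d d ℝ} (h : X.PosDef) {x : d → ℝ} (hx : x ≠ 0) :
    0 < x ⬝ᵥ X *ᵥ x := by simpa using h.dotProduct_mulVec_pos hx

lemma posdef_add_psd {X Y : Matrix d d ℝ} (hX : X.PosDef) (hY : Y.PosSemidef) :
    (X + Y).PosDef :=
  posdef_of_forms (by rw [transpose_add, herm_iff.1 hX.1, herm_iff.1 hY.1])
    (fun x hx => by
      rw [add_mulVec, dotProduct_add]
      exact add_pos_of_pos_of_nonneg (form_pos hX hx) (form_nonneg hY x))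

lemma posdef_smul {X : Matrix d d ℝ} {c : ℝ} (hX : X.PosDef) (hc : 0 < c) :
    (c • X).PosDef :=
  posdef_of_forms (by rw [transpose_smul, herm_iff.1 hX.1])
    (fun x hx => by
      rw [smul_mulVec, dotProduct_smul]
      exact mul_pos hc (form_pos hX hx))

lemma pLE_refl (X : Matrix d d ℝ) : pLE X X := by simpa [pLE] using psd_zero

lemma pLE_trans {X Y Z : Matrix d d ℝ} (h1 : pLE X Y) (h2 : pLE Y Z) : pLE X Z := by
  have := psd_add h2 h1
  simpa [pLE] using this

lemma pLE_add {X Y X' Y' : Matrix d d ℝ} (h : pLE X Y) (h' : pLE X' Y') :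
    pLE (X + X') (Y + Y') := by
  have := psd_add h h'
  have e : Y - X + (Y' - X') = Y + Y' - (X + X') := by abel
  rwa [pLE, ← e]

lemma pLE_sum {ι : Type*} (s : Finset ι) (f g : ι → Matrix d d ℝ)
    (h : ∀ j ∈ s, pLE (f j) (g j)) : pLE (∑ j ∈ s, f j) (∑ j ∈ s, g j) := by
  have : (∑ j ∈ s, g j) - (∑ j ∈ s, f j) = ∑ j ∈ s, (g j - f j) := by
    rw [Finset.sum_sub_distrib]
  rw [pLE, this]
  exact psd_finset_sum _ _ h

lemma pLE_smul {X Y : Matrix d d ℝ} {c : ℝ} (h : pLE X Y) (hc : 0 ≤ c) :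
    pLE (c • X) (c • Y) := by
  have := psd_smul h hc
  rwa [pLE, ← smul_sub]

lemma pLE_smul_scalar {X : Matrix d d ℝ} {a b : ℝ} (hX : X.PosSemidef) (hab : a ≤ b) :
    pLE (a • X) (b • X) := by
  have := psd_smul hX (sub_nonneg.2 hab)
  rwa [pLE, ← sub_smul]

lemma pLE_conj {X Y : Matrix d d ℝ} (h : pLE X Y) (B : Matrix d d ℝ) :
    pLE (B * X * Bᵀ) (B * Y * Bᵀ) := by
  have := psd_conj h B
  rwa [pLE, ← Matrix.sub_mul, ← Matrix.mul_sub]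

lemma pLE_form {X Y : Matrix d d ℝ} (h : pLE X Y) (x : d → ℝ) :
    x ⬝ᵥ X *ᵥ x ≤ x ⬝ᵥ Y *ᵥ x := by
  have := form_nonneg h x
  rw [sub_mulVec, dotProduct_sub] at this
  linarith

lemma pLE_of_forms {X Y : Matrix d d ℝ} (hX : Xᵀ = X) (hY : Yᵀ = Y)
    (h : ∀ x, x ⬝ᵥ X *ᵥ x ≤ x ⬝ᵥ Y *ᵥ x) : pLE X Y :=
  psd_of_forms (by rw [transpose_sub, hX, hY]) (fun x => by
    rw [sub_mulVec, dotProduct_sub]; linarith [h x])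

lemma posdef_of_pLE {X Y : Matrix d d ℝ} (hX : X.PosDef) (hY : Yᵀ = Y) (h : pLE X Y) :
    Y.PosDef :=
  posdef_of_forms hY fun x hx => lt_of_lt_of_le (form_pos hX hx) (pLE_form h x)

lemma pd_detUnit {X : Matrix d d ℝ} (h : X.PosDef) : IsUnit X.det :=
  (Matrix.isUnit_iff_isUnit_det X).mp h.isUnit

lemma herm_inv {X : Matrix d d ℝ} (h : Xᵀ = X) : (X⁻¹)ᵀ = X⁻¹ := by
  rw [transpose_nonsing_inv, h]

lemma inv_antitone {X Y : Matrix d d ℝ} (hX : X.PosDef) (hY : Y.PosDef) (h : pLE X Y) :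
    pLE Y⁻¹ X⁻¹ := by
  have hXs : Xᵀ = X := herm_iff.1 hX.1
  have hYs : Yᵀ = Y := herm_iff.1 hY.1
  refine pLE_of_forms (herm_inv hYs) (herm_inv hXs) fun x => ?_
  set y := Y⁻¹ *ᵥ x with hy
  set u := X⁻¹ *ᵥ x with hu
  have hYy : Y *ᵥ y = x := by
    rw [hy, mulVec_mulVec, mul_nonsing_inv _ (pd_detUnit hY), one_mulVec]
  have hXu : X *ᵥ u = x := by
    rw [hu, mulVec_mulVec, mul_nonsing_inv _ (pd_detUnit hX), one_mulVec]
  have key1 : x ⬝ᵥ Y⁻¹ *ᵥ x = 2 * (x ⬝ᵥ y) - y ⬝ᵥ Y *ᵥ y := by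
    rw [hYy, dotProduct_comm y x]; ring
  have key2 : y ⬝ᵥ X *ᵥ y ≤ y ⬝ᵥ Y *ᵥ y := pLE_form h y
  have huXy : u ⬝ᵥ X *ᵥ y = x ⬝ᵥ y := by
    rw [dotProduct_mulVec, ← mulVec_transpose, hXs, hXu]
  have hyXu : y ⬝ᵥ X *ᵥ u = y ⬝ᵥ x := by rw [hXu]
  have hux : u ⬝ᵥ x = x ⬝ᵥ X⁻¹ *ᵥ x := by rw [dotProduct_comm, hu]
  have key3 : (y - u) ⬝ᵥ X *ᵥ (y - u)
      = y ⬝ᵥ X *ᵥ y - 2 * (x ⬝ᵥ y) + x ⬝ᵥ X⁻¹ *ᵥ x := by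
    rw [mulVec_sub, dotProduct_sub, sub_dotProduct, sub_dotProduct, huXy]
    rw [hXu, hux, dotProduct_comm y x]
    ring
  have key4 : 0 ≤ (y - u) ⬝ᵥ X *ᵥ (y - u) := form_nonneg hX.posSemidef _
  linarith

lemma smul_inv_eq {c : ℝ} {X : Matrix d d ℝ} (hc : c ≠ 0) (hX : IsUnit X.det) :
    (c • X)⁻¹ = c⁻¹ • X⁻¹ := by
  apply Matrix.inv_eq_right_inv
  rw [Matrix.smul_mul, Matrix.mul_smul, smul_smul, mul_inv_cancel₀ hc,
    mul_nonsing_inv _ hX, one_smul]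

lemma smul_one_inv {c : ℝ} (hc : c ≠ 0) :
    ((c • (1 : Matrix d d ℝ))⁻¹ : Matrix d d ℝ) = c⁻¹ • 1 := by
  rw [smul_inv_eq hc (by simp), inv_one]

lemma posdef_smul_one {c : ℝ} (hc : 0 < c) : (c • (1 : Matrix d d ℝ)).PosDef :=
  posdef_smul Matrix.PosDef.one hc

lemma dot_self_nonneg (x : d → ℝ) : 0 ≤ x ⬝ᵥ x :=
  Finset.sum_nonneg fun i _ => mul_self_nonneg (x i)

lemma form_smul_one (c : ℝ) (x : d → ℝ) :
    x ⬝ᵥ (c • (1 : Matrix d d ℝ)) *ᵥ x = c * (x ⬝ᵥ x) := by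
  rw [smul_mulVec, one_mulVec, dotProduct_smul, smul_eq_mul]

lemma exists_ub {X : Matrix d d ℝ} (hherm : Xᵀ = X) :
    ∃ b : ℝ, 0 < b ∧ pLE X (b • 1) := by
  classical
  set B : ℝ := ∑ a : d, ∑ c : d, |X a c| with hB
  have hBnn : 0 ≤ B :=
    Finset.sum_nonneg fun a _ => Finset.sum_nonneg fun c _ => abs_nonneg _
  refine ⟨B + 1, by linarith, ?_⟩
  refine pLE_of_forms hherm (by simp [transpose_smul]) fun x => ?_
  rw [form_smul_one]
  have hxx := dot_self_nonneg x
  have h1 : ∀ a : d, x a * x a ≤ x ⬝ᵥ x := fun a =>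
    Finset.single_le_sum (f := fun i => x i * x i)
      (fun i _ => mul_self_nonneg (x i)) (Finset.mem_univ a)
  have h2 : ∀ a c : d, |x a * x c| ≤ x ⬝ᵥ x := by
    intro a c
    have ha := h1 a; have hc := h1 c
    have := abs_mul (x a) (x c)
    nlinarith [abs_nonneg (x a), abs_nonneg (x c), sq_abs (x a), sq_abs (x c),
      two_mul_le_add_sq |x a| |x c|]
  have hform : x ⬝ᵥ X *ᵥ x = ∑ a : d, ∑ c : d, x a * (X a c * x c) := by
    simp [dotProduct, mulVec, Finset.mul_sum]
  calc x ⬝ᵥ X *ᵥ x ≤ |x ⬝ᵥ X *ᵥ x| := le_abs_self _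
    _ ≤ ∑ a : d, ∑ c : d, |X a c| * |x a * x c| := by
        rw [hform]
        refine (Finset.abs_sum_le_sum_abs _ _).trans ?_
        refine Finset.sum_le_sum fun a _ => ?_
        refine (Finset.abs_sum_le_sum_abs _ _).trans ?_
        refine Finset.sum_le_sum fun c _ => le_of_eq ?_
        rw [abs_mul, abs_mul, abs_mul]
        ring
    _ ≤ ∑ a : d, ∑ c : d, |X a c| * (x ⬝ᵥ x) := by
        refine Finset.sum_le_sum fun a _ => Finset.sum_le_sum fun c _ => ?_
        exact mul_le_mul_of_nonneg_left (h2 a c) (abs_nonneg _)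
    _ = B * (x ⬝ᵥ x) := by rw [hB, Finset.sum_mul]; simp [Finset.sum_mul]
    _ ≤ (B + 1) * (x ⬝ᵥ x) := by nlinarith

lemma exists_lb {X : Matrix d d ℝ} (hX : X.PosDef) :
    ∃ e : ℝ, 0 < e ∧ pLE (e • 1) X := by
  obtain ⟨b, hb, hub⟩ := exists_ub (herm_inv (herm_iff.1 hX.1))
  refine ⟨b⁻¹, by positivity, ?_⟩
  have h := inv_antitone hX.inv (posdef_smul_one hb) hub
  rwa [smul_one_inv hb.ne', nonsing_inv_nonsing_inv _ (pd_detUnit hX)] at h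

lemma exists_smul_pLE {X Y : Matrix d d ℝ} (hX : X.PosDef) (hY : Y.PosDef) :
    ∃ t : ℝ, 0 < t ∧ pLE X (t • Y) := by
  obtain ⟨b, hb, hub⟩ := exists_ub (herm_iff.1 hX.1)
  obtain ⟨e, he, hlb⟩ := exists_lb hY
  refine ⟨b * e⁻¹, by positivity, ?_⟩
  refine pLE_trans hub ?_
  have h := pLE_smul hlb (c := b * e⁻¹) (by positivity)
  have e1 : (b * e⁻¹) • (e • (1 : Matrix d d ℝ)) = b • 1 := by
    rw [smul_smul]; congr 1; field_simp
  rwa [e1] at h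

lemma form_single (X : Matrix d d ℝ) (a : d) :
    (Pi.single a 1 : d → ℝ) ⬝ᵥ X *ᵥ (Pi.single a 1) = X a a := by
  rw [mulVec_single, single_dotProduct]; simp

lemma transpose_entry {X : Matrix d d ℝ} (h : Xᵀ = X) (a b : d) : X b a = X a b := by
  conv_lhs => rw [← h]
  rfl

lemma form_single_add (X : Matrix d d ℝ) (h : Xᵀ = X) (a b : d) :
    ((Pi.single a 1 + Pi.single b 1 : d → ℝ)) ⬝ᵥ X *ᵥ (Pi.single a 1 + Pi.single b 1)
      = X a a + X b b + 2 * X a b := by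
  rw [mulVec_add, dotProduct_add, add_dotProduct, add_dotProduct]
  rw [mulVec_single, mulVec_single]
  rw [single_dotProduct, single_dotProduct, single_dotProduct, single_dotProduct]
  simp only [mul_one, one_mul, MulOpposite.op_one, one_smul, Matrix.col_apply]
  rw [transpose_entry h a b]
  ring

lemma entry_eq_forms {X : Matrix d d ℝ} (h : Xᵀ = X) (a b : d) :
    X a b = (((Pi.single a 1 + Pi.single b 1 : d → ℝ)) ⬝ᵥ X *ᵥ (Pi.single a 1 + Pi.single b 1)
      - (Pi.single a 1 : d → ℝ) ⬝ᵥ X *ᵥ (Pi.single a 1)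
      - (Pi.single b 1 : d → ℝ) ⬝ᵥ X *ᵥ (Pi.single b 1)) / 2 := by
  rw [form_single_add X h, form_single, form_single]; ring

lemma continuous_form (x : d → ℝ) :
    Continuous fun M : Matrix d d ℝ => x ⬝ᵥ M *ᵥ x := by
  have e : (fun M : Matrix d d ℝ => x ⬝ᵥ M *ᵥ x)
      = fun M : Matrix d d ℝ => ∑ a : d, x a * ∑ b : d, M a b * x b := rfl
  rw [e]
  refine continuous_finset_sum _ fun a _ => Continuous.mul continuous_const ?_
  refine continuous_finset_sum _ fun b _ => Continuous.mul ?_ continuous_const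
  exact (continuous_apply b).comp (continuous_apply a)

lemma tendsto_forms_of_tendsto {Z : ℕ → Matrix d d ℝ} {P : Matrix d d ℝ}
    (h : Tendsto Z atTop (𝓝 P)) (x : d → ℝ) :
    Tendsto (fun k => x ⬝ᵥ Z k *ᵥ x) atTop (𝓝 (x ⬝ᵥ P *ᵥ x)) :=
  ((continuous_form x).continuousAt.tendsto).comp h

lemma tendsto_of_forms {Z : ℕ → Matrix d d ℝ} {P : Matrix d d ℝ}
    (hZ : ∀ k, (Z k)ᵀ = Z k) (hP : Pᵀ = P)
    (h : ∀ x, Tendsto (fun k => x ⬝ᵥ Z k *ᵥ x) atTop (𝓝 (x ⬝ᵥ P *ᵥ x))) :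
    Tendsto Z atTop (𝓝 P) := by
  refine tendsto_pi_nhds.2 fun a => tendsto_pi_nhds.2 fun b => ?_
  have e1 : (fun k => Z k a b) = fun k =>
      (((Pi.single a 1 + Pi.single b 1 : d → ℝ)) ⬝ᵥ Z k *ᵥ (Pi.single a 1 + Pi.single b 1)
      - (Pi.single a 1 : d → ℝ) ⬝ᵥ Z k *ᵥ (Pi.single a 1)
      - (Pi.single b 1 : d → ℝ) ⬝ᵥ Z k *ᵥ (Pi.single b 1)) / 2 :=
    funext fun k => entry_eq_forms (hZ k) a b
  rw [e1, entry_eq_forms hP a b]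
  exact (((h _).sub (h _)).sub (h _)).div_const 2

lemma exists_tendsto_of_monotone {Z : ℕ → Matrix d d ℝ}
    (hherm : ∀ k, (Z k)ᵀ = Z k)
    (hmono : ∀ k, pLE (Z k) (Z (k+1)))
    (hb : ∀ x : d → ℝ, ∃ b : ℝ, ∀ k, x ⬝ᵥ Z k *ᵥ x ≤ b) :
    ∃ P : Matrix d d ℝ, Pᵀ = P ∧ Tendsto Z atTop (𝓝 P) ∧ ∀ k, pLE (Z k) P := by
  classical
  have hqmono : ∀ x : d → ℝ, Monotone fun k => x ⬝ᵥ Z k *ᵥ x := fun x =>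
    monotone_nat_of_le_succ fun k => pLE_form (hmono k) x
  have hqbdd : ∀ x : d → ℝ, BddAbove (Set.range fun k => x ⬝ᵥ Z k *ᵥ x) := by
    intro x; obtain ⟨b, hb'⟩ := hb x
    exact ⟨b, by rintro _ ⟨k, rfl⟩; exact hb' k⟩
  set q : (d → ℝ) → ℝ := fun x => ⨆ k, x ⬝ᵥ Z k *ᵥ x with hqdef
  have hq : ∀ x, Tendsto (fun k => x ⬝ᵥ Z k *ᵥ x) atTop (𝓝 (q x)) := fun x =>
    tendsto_atTop_ciSup (hqmono x) (hqbdd x)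
  set P : Matrix d d ℝ := Matrix.of fun a b =>
    (q (Pi.single a 1 + Pi.single b 1) - q (Pi.single a 1) - q (Pi.single b 1)) / 2 with hPdef
  have hPsymm : Pᵀ = P := by
    ext a b
    show P b a = P a b
    simp only [hPdef, Matrix.of_apply]
    rw [add_comm (Pi.single b 1)]
    ring
  have htendsto : Tendsto Z atTop (𝓝 P) := by
    refine tendsto_pi_nhds.2 fun a => tendsto_pi_nhds.2 fun b => ?_
    have e1 : (fun k => Z k a b) = fun k =>
        (((Pi.single a 1 + Pi.single b 1 : d → ℝ)) ⬝ᵥ Z k *ᵥ (Pi.single a 1 + Pi.single b 1)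
        - (Pi.single a 1 : d → ℝ) ⬝ᵥ Z k *ᵥ (Pi.single a 1)
        - (Pi.single b 1 : d → ℝ) ⬝ᵥ Z k *ᵥ (Pi.single b 1)) / 2 :=
      funext fun k => entry_eq_forms (hherm k) a b
    rw [e1]
    have : P a b = (q (Pi.single a 1 + Pi.single b 1) - q (Pi.single a 1) - q (Pi.single b 1)) / 2 := rfl
    rw [this]
    exact (((hq _).sub (hq _)).sub (hq _)).div_const 2
  have hformP : ∀ x, x ⬝ᵥ P *ᵥ x = q x := fun x =>
    tendsto_nhds_unique (tendsto_forms_of_tendsto htendsto x) (hq x)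
  refine ⟨P, hPsymm, htendsto, fun k => ?_⟩
  refine pLE_of_forms (hherm k) hPsymm fun x => ?_
  rw [hformP]
  exact le_ciSup (hqbdd x) k

lemma pLE_zero_iff {X : Matrix d d ℝ} : pLE 0 X ↔ X.PosSemidef := by rw [pLE, sub_zero]

lemma form_add (X Y : Matrix d d ℝ) (x : d → ℝ) :
    x ⬝ᵥ (X + Y) *ᵥ x = x ⬝ᵥ X *ᵥ x + x ⬝ᵥ Y *ᵥ x := by
  rw [add_mulVec, dotProduct_add]

lemma form_smul (c : ℝ) (X : Matrix d d ℝ) (x : d → ℝ) :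
    x ⬝ᵥ (c • X) *ᵥ x = c * (x ⬝ᵥ X *ᵥ x) := by
  rw [smul_mulVec, dotProduct_smul, smul_eq_mul]

lemma form_sum {ι : Type*} (s : Finset ι) (f : ι → Matrix d d ℝ) (x : d → ℝ) :
    x ⬝ᵥ (∑ j ∈ s, f j) *ᵥ x = ∑ j ∈ s, x ⬝ᵥ f j *ᵥ x := by
  classical
  induction s using Finset.induction_on with
  | empty => simp [Matrix.zero_mulVec]
  | @insert a s' hnot ih =>
    rw [Finset.sum_insert hnot, Finset.sum_insert hnot, form_add, ih]

lemma form_conj {e : Type*} [Fintype e] (B : Matrix d e ℝ) (X : Matrix e e ℝ) (x : d → ℝ) :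
    x ⬝ᵥ (B * X * Bᵀ) *ᵥ x = (Bᵀ *ᵥ x) ⬝ᵥ X *ᵥ (Bᵀ *ᵥ x) := by
  rw [← mulVec_mulVec, ← mulVec_mulVec, dotProduct_mulVec x, ← mulVec_transpose]

lemma form_conj' {e : Type*} [Fintype e] (Cm : Matrix e d ℝ) (X : Matrix e e ℝ) (x : d → ℝ) :
    x ⬝ᵥ (Cmᵀ * X * Cm) *ᵥ x = (Cm *ᵥ x) ⬝ᵥ X *ᵥ (Cm *ᵥ x) := by
  rw [← mulVec_mulVec, ← mulVec_mulVec, dotProduct_mulVec x, ← mulVec_transpose,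
    transpose_transpose]

lemma conj_herm {e : Type*} [Fintype e] (B : Matrix d e ℝ) {X : Matrix e e ℝ} (h : Xᵀ = X) :
    (B * X * Bᵀ)ᵀ = B * X * Bᵀ := by
  rw [transpose_mul, transpose_mul, transpose_transpose, h, Matrix.mul_assoc]

lemma herm_smul {X : Matrix d d ℝ} (c : ℝ) (h : Xᵀ = X) : (c • X)ᵀ = c • X := by
  rw [transpose_smul, h]

lemma posdef_conj_inv {X B : Matrix d d ℝ} (hX : X.PosDef) (hB : IsUnit B.det) :
    (B * X * Bᵀ).PosDef := by
  refine posdef_of_forms (conj_herm B (herm_iff.1 hX.1)) fun x hx => ?_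
  rw [form_conj]
  refine form_pos hX fun h0 => hx ?_
  have h1 : Bᵀ⁻¹ *ᵥ (Bᵀ *ᵥ x) = x := by
    rw [mulVec_mulVec, nonsing_inv_mul _ (by rwa [det_transpose]), one_mulVec]
  rw [← h1, h0, mulVec_zero]

lemma pow_mul_inv_pow {X : Matrix d d ℝ} (hX : IsUnit X.det) (a : ℕ) :
    X ^ a * X⁻¹ ^ a = 1 := by
  induction a with
  | zero => simp
  | succ a ih =>
    rw [pow_succ, pow_succ']
    calc X ^ a * X * (X⁻¹ * X⁻¹ ^ a) = X ^ a * (X * X⁻¹) * X⁻¹ ^ a := by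
          simp only [Matrix.mul_assoc]
      _ = X ^ a * X⁻¹ ^ a := by rw [mul_nonsing_inv _ hX, Matrix.mul_one]
      _ = 1 := ih

lemma form_CtC {e : Type*} [Fintype e] (Cm : Matrix e d ℝ) (x : d → ℝ) :
    x ⬝ᵥ (Cmᵀ * Cm) *ᵥ x = (Cm *ᵥ x) ⬝ᵥ (Cm *ᵥ x) := by
  rw [← mulVec_mulVec, dotProduct_mulVec, ← mulVec_transpose, transpose_transpose]

end HCRE

section Main

open HCRE

set_option maxHeartbeats 3200000 in
/-- For a primitive nonnegative matrix `ν`, the modified HCREs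
`P_i = A (∑_j l_{ij} P_j⁻¹ + ν_{ij} C_jᵀ R_j⁻¹ C_j)⁻¹ Aᵀ + Q` have a unique group of
positive definite solutions, and the iterates of the modified iterative law converge
entrywise to these solutions from any positive definite initial matrices. -/
theorem modified_hcre_unique_solution_and_convergence
    (n N : ℕ) (hn : 0 < n) (hN : 0 < N)
    (m : Fin N → ℕ) (hm : ∀ i, 0 < m i)
    (A : Matrix (Fin n) (Fin n) ℝ) (hA : IsUnit A.det)
    (C : ∀ i : Fin N, Matrix (Fin (m i)) (Fin n) ℝ)
    (hObs : (∑ k ∈ Finset.range n, (A ^ k)ᵀ * (∑ i, (C i)ᵀ * C i) * A ^ k).PosDef)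
    (Q : Matrix (Fin n) (Fin n) ℝ) (hQ : Q.PosDef)
    (R : ∀ i : Fin N, Matrix (Fin (m i)) (Fin (m i)) ℝ) (hR : ∀ i, (R i).PosDef)
    (L : Matrix (Fin N) (Fin N) ℝ)
    (hLnonneg : ∀ i j, 0 ≤ L i j) (hLrow : ∀ i, ∑ j, L i j = 1)
    (hLprim : ∃ k : ℕ, 0 < k ∧ ∀ i j, 0 < (L ^ k) i j)
    (ν : Matrix (Fin N) (Fin N) ℝ)
    (hνnonneg : ∀ i j, 0 ≤ ν i j)
    (hνprim : ∃ k : ℕ, 0 < k ∧ ∀ i j, 0 < (ν ^ k) i j) :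
    ∃ P : Fin N → Matrix (Fin n) (Fin n) ℝ,
      (∀ i, (P i).PosDef) ∧
      (∀ i, P i =
        A * (∑ j, (L i j • (P j)⁻¹ + ν i j • ((C j)ᵀ * (R j)⁻¹ * C j)))⁻¹ * Aᵀ + Q) ∧
      (∀ P' : Fin N → Matrix (Fin n) (Fin n) ℝ,
        (∀ i, (P' i).PosDef) →
        (∀ i, P' i =
          A * (∑ j, (L i j • (P' j)⁻¹ + ν i j • ((C j)ᵀ * (R j)⁻¹ * C j)))⁻¹ * Aᵀ + Q) →
        P' = P) ∧
      (∀ (P0 : Fin N → Matrix (Fin n) (Fin n) ℝ), (∀ i, (P0 i).PosDef) →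
        ∀ (Pseq : ℕ → Fin N → Matrix (Fin n) (Fin n) ℝ),
          Pseq 0 = P0 →
          (∀ k i, Pseq (k + 1) i =
            A * (∑ j, (L i j • (Pseq k j)⁻¹ + ν i j • ((C j)ᵀ * (R j)⁻¹ * C j)))⁻¹ * Aᵀ + Q) →
          ∀ i : Fin N, Tendsto (fun k => Pseq k i) atTop (nhds (P i))) := by
  classical
  obtain ⟨K, hKpos, hKL⟩ := hLprim
  have hATdet : IsUnit (Aᵀ).det := by rwa [det_transpose]
  have hQs : Qᵀ = Q := herm_iff.1 hQ.1
  set S : Fin N → Matrix (Fin n) (Fin n) ℝ := fun j => (C j)ᵀ * (R j)⁻¹ * C j with hSdef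
  have hRinv : ∀ j, ((R j)⁻¹).PosDef := fun j => (hR j).inv
  have hSherm : ∀ j, (S j)ᵀ = S j := by
    intro j
    have := conj_herm ((C j)ᵀ) (herm_iff.1 (hRinv j).1)
    rwa [transpose_transpose] at this
  have hSpsd : ∀ j, (S j).PosSemidef := by
    intro j
    have := psd_conj (hRinv j).posSemidef ((C j)ᵀ)
    rwa [transpose_transpose] at this
  set Mf : (Fin N → Matrix (Fin n) (Fin n) ℝ) → Fin N → Matrix (Fin n) (Fin n) ℝ :=
    fun P i => ∑ j, (L i j • (P j)⁻¹ + ν i j • S j) with hMdef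
  set Ff : (Fin N → Matrix (Fin n) (Fin n) ℝ) → Fin N → Matrix (Fin n) (Fin n) ℝ :=
    fun P i => A * (Mf P i)⁻¹ * Aᵀ + Q with hFdef
  -- row positivity
  have hLrowpos : ∀ i, ∃ q, 0 < L i q := by
    intro i
    by_contra h
    push_neg at h
    have : ∑ j, L i j = 0 := Finset.sum_eq_zero fun j _ => le_antisymm (h j) (hLnonneg i j)
    rw [hLrow i] at this; norm_num at this
  -- Hermitian-ness of Mf
  have hMherm : ∀ P, (∀ j, ((P j)ᵀ = P j)) → ∀ i, (Mf P i)ᵀ = Mf P i := by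
    intro P hP i
    rw [hMdef]
    dsimp only
    rw [transpose_sum]
    refine Finset.sum_congr rfl fun j _ => ?_
    rw [transpose_add, herm_smul _ (herm_inv (hP j)), herm_smul _ (hSherm j)]
  -- positive definiteness of Mf
  have hMpd : ∀ P, (∀ j, (P j).PosDef) → ∀ i, (Mf P i).PosDef := by
    intro P hP i
    obtain ⟨q, hq⟩ := hLrowpos i
    rw [hMdef]
    dsimp only
    rw [← Finset.add_sum_erase _ _ (Finset.mem_univ q)]
    refine posdef_add_psd (posdef_add_psd (posdef_smul (hP q).inv hq)
      (psd_smul (hSpsd q) (hνnonneg i q))) ?_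
    exact psd_finset_sum _ _ fun j _ => psd_add (psd_smul ((hP j).inv).posSemidef (hLnonneg i j))
      (psd_smul (hSpsd j) (hνnonneg i j))
  have hFherm : ∀ P, (∀ j, (P j).PosDef) → ∀ i, (Ff P i)ᵀ = Ff P i := by
    intro P hP i
    rw [hFdef]
    dsimp only
    rw [transpose_add, hQs, conj_herm A (herm_inv (herm_iff.1 (hMpd P hP i).1))]
  have hFgeQ : ∀ P, (∀ j, (P j).PosDef) → ∀ i, pLE Q (Ff P i) := by
    intro P hP i
    rw [hFdef]
    dsimp only
    rw [pLE, add_sub_cancel_right]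
    exact psd_conj ((hMpd P hP i).inv).posSemidef A
  have hFpd : ∀ P, (∀ j, (P j).PosDef) → ∀ i, (Ff P i).PosDef := by
    intro P hP i
    exact posdef_of_pLE hQ (hFherm P hP i) (hFgeQ P hP i)
  have hFmono : ∀ X Y, (∀ j, (X j).PosDef) → (∀ j, (Y j).PosDef) →
      (∀ j, pLE (X j) (Y j)) → ∀ i, pLE (Ff X i) (Ff Y i) := by
    intro X Y hX hY hXY i
    have hMle : pLE (Mf Y i) (Mf X i) := by
      rw [hMdef]; dsimp only
      refine pLE_sum _ _ _ fun j _ => pLE_add ?_ (pLE_refl _)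
      exact pLE_smul (inv_antitone (hX j) (hY j) (hXY j)) (hLnonneg i j)
    have := pLE_conj (inv_antitone (hMpd Y hY i) (hMpd X hX i) hMle) A
    rw [hFdef]; dsimp only
    rw [pLE, add_sub_add_right_eq_sub]
    rw [pLE] at this
    exact this

  -- the "information form" of the iteration
  set Bm : Matrix (Fin n) (Fin n) ℝ := (Aᵀ)⁻¹ with hBmdef
  have hBmT : Bmᵀ = A⁻¹ := by rw [hBmdef, ← transpose_nonsing_inv, transpose_transpose]
  have hAinvdet : IsUnit (A⁻¹).det := by
    rw [Matrix.det_nonsing_inv]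
    exact hA.ringInverse
  set G : Matrix (Fin n) (Fin n) ℝ := A⁻¹ * Q * (A⁻¹)ᵀ with hGdef
  have hGpd : G.PosDef := by
    rw [hGdef]
    exact posdef_conj_inv hQ hAinvdet
  have hGs : Gᵀ = G := herm_iff.1 hGpd.1
  -- (Ff P i) = A * ((Mf P i)⁻¹ + G) * Aᵀ  and its inverse
  have hFalt : ∀ P, (∀ j, (P j).PosDef) → ∀ i,
      Ff P i = A * ((Mf P i)⁻¹ + G) * Aᵀ := by
    intro P hP i
    rw [hFdef]; dsimp only
    rw [Matrix.mul_add, Matrix.add_mul]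
    congr 1
    rw [hGdef, transpose_nonsing_inv]
    refine Eq.symm ?_
    calc A * (A⁻¹ * Q * (Aᵀ)⁻¹) * Aᵀ = (A * A⁻¹) * Q * ((Aᵀ)⁻¹ * Aᵀ) := by
          simp only [Matrix.mul_assoc]
      _ = Q := by rw [mul_nonsing_inv _ hA, nonsing_inv_mul _ hATdet, Matrix.one_mul,
          Matrix.mul_one]
  have hMGpd : ∀ P, (∀ j, (P j).PosDef) → ∀ i, ((Mf P i)⁻¹ + G).PosDef := by
    intro P hP i
    exact posdef_add_psd (hMpd P hP i).inv hGpd.posSemidef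
  have hFinv : ∀ P, (∀ j, (P j).PosDef) → ∀ i,
      (Ff P i)⁻¹ = Bm * ((Mf P i)⁻¹ + G)⁻¹ * Bmᵀ := by
    intro P hP i
    rw [hFalt P hP i, Matrix.mul_inv_rev, Matrix.mul_inv_rev, hBmT, hBmdef,
      Matrix.mul_assoc]
  -- uniform upper bound on Mf P i when Q ⊑ P j
  have hQinvherm : (Q⁻¹)ᵀ = Q⁻¹ := herm_inv hQs
  set U : Fin N → Matrix (Fin n) (Fin n) ℝ :=
    fun i => ∑ j, (L i j • Q⁻¹ + ν i j • S j) with hUdef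
  have hUherm : ∀ i, (U i)ᵀ = U i := by
    intro i
    rw [hUdef]; dsimp only
    rw [transpose_sum]
    refine Finset.sum_congr rfl fun j _ => ?_
    rw [transpose_add, herm_smul _ hQinvherm, herm_smul _ (hSherm j)]
  obtain ⟨beta, hbeta, hUbound⟩ : ∃ b : ℝ, 0 < b ∧ ∀ i, pLE (U i) (b • 1) := by
    have h : ∀ i : Fin N, ∃ b : ℝ, 0 < b ∧ pLE (U i) (b • 1) := fun i => by
      obtain ⟨b, hb, hle⟩ := exists_ub (hUherm i)
      exact ⟨b, hb, hle⟩
    choose b hb hble using h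
    have hsnn : 0 ≤ ∑ i, b i := Finset.sum_nonneg fun i _ => (hb i).le
    refine ⟨1 + ∑ i, b i, by linarith, fun i => ?_⟩
    refine pLE_trans (hble i) (pLE_smul_scalar Matrix.PosDef.one.posSemidef ?_)
    have : b i ≤ ∑ j, b j := Finset.single_le_sum (fun j _ => (hb j).le) (Finset.mem_univ i)
    linarith
  obtain ⟨g, hg, hGbound⟩ : ∃ g : ℝ, 0 < g ∧ pLE G (g • 1) := by
    obtain ⟨g, hg, hle⟩ := exists_ub hGs
    exact ⟨g, hg, hle⟩
  set gam : ℝ := (1 + g * beta)⁻¹ with hgamdef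
  have hgam : 0 < gam := by rw [hgamdef]; positivity
  have hgb : 0 < 1 + g * beta := by positivity
  -- the key lower bound (★)
  have hstar : ∀ P, (∀ j, (P j).PosDef) → (∀ j, pLE Q (P j)) → ∀ i,
      pLE (gam • (Bm * Mf P i * Bmᵀ)) ((Ff P i)⁻¹) := by
    intro P hP hPQ i
    have hMub : pLE (Mf P i) (beta • 1) := by
      refine pLE_trans ?_ (hUbound i)
      rw [hMdef, hUdef]; dsimp only
      refine pLE_sum _ _ _ fun j _ => pLE_add ?_ (pLE_refl _)
      exact pLE_smul (inv_antitone hQ (hP j) (hPQ j)) (hLnonneg i j)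
    have hMpdi := hMpd P hP i
    have hMinvlb : pLE (beta⁻¹ • 1) ((Mf P i)⁻¹) := by
      have := inv_antitone hMpdi (posdef_smul_one hbeta) hMub
      rwa [smul_one_inv hbeta.ne'] at this
    have hGle : pLE G ((g * beta) • ((Mf P i)⁻¹)) := by
      refine pLE_trans hGbound ?_
      have h1 := pLE_smul hMinvlb (c := g * beta) (by positivity)
      have e1 : (g * beta) • (beta⁻¹ • (1 : Matrix (Fin n) (Fin n) ℝ)) = g • 1 := by
        rw [smul_smul]
        congr 1
        field_simp
      rwa [e1] at h1
    have hsum : pLE ((Mf P i)⁻¹ + G) ((1 + g * beta) • ((Mf P i)⁻¹)) := by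
      have h1 := pLE_add (pLE_refl ((Mf P i)⁻¹)) hGle
      have e1 : (Mf P i)⁻¹ + (g * beta) • (Mf P i)⁻¹ = (1 + g * beta) • (Mf P i)⁻¹ := by
        rw [add_smul, one_smul]
      rwa [e1] at h1
    have hinv2 := inv_antitone (hMGpd P hP i)
      (posdef_smul hMpdi.inv hgb) hsum
    have e2 : (((1 + g * beta) • (Mf P i)⁻¹)⁻¹ : Matrix (Fin n) (Fin n) ℝ)
        = gam • Mf P i := by
      rw [smul_inv_eq hgb.ne' (pd_detUnit hMpdi.inv), nonsing_inv_nonsing_inv _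
        (pd_detUnit hMpdi), hgamdef]
    rw [e2] at hinv2
    have hconj := pLE_conj hinv2 Bm
    rw [hFinv P hP i]
    have e3 : Bm * (gam • Mf P i) * Bmᵀ = gam • (Bm * Mf P i * Bmᵀ) := by
      rw [Matrix.mul_smul, Matrix.smul_mul]
    rwa [e3] at hconj

  -- the iteration sequence started from Q
  set Z : ℕ → Fin N → Matrix (Fin n) (Fin n) ℝ := fun k => Ff^[k] (fun _ => Q) with hZdef
  have hZsucc : ∀ k, Z (k+1) = Ff (Z k) := by
    intro k
    rw [hZdef]
    exact Function.iterate_succ_apply' Ff k _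
  have hZ0 : Z 0 = fun _ => Q := rfl
  have hZpd : ∀ k j, (Z k j).PosDef := by
    intro k
    induction k with
    | zero => intro j; exact hQ
    | succ k ih => intro j; rw [hZsucc k]; exact hFpd (Z k) ih j
  have hZherm : ∀ k j, (Z k j)ᵀ = Z k j := by
    intro k
    induction k with
    | zero => intro j; exact hQs
    | succ k ih => intro j; rw [hZsucc k]; exact hFherm (Z k) (hZpd k) j
  have hZgeQ : ∀ k j, pLE Q (Z k j) := by
    intro k
    induction k with
    | zero => intro j; exact pLE_refl Q
    | succ k ih => intro j; rw [hZsucc k]; exact hFgeQ (Z k) (hZpd k) j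
  have hZstep : ∀ k i, pLE (Z k i) (Z (k+1) i) := by
    intro k
    induction k with
    | zero => intro i; rw [hZsucc 0]; exact hFgeQ (Z 0) (hZpd 0) i
    | succ k ih =>
      intro i
      rw [hZsucc (k+1), hZsucc k]
      exact hFmono (Z k) (Ff (Z k)) (hZpd k) (by rw [← hZsucc k]; exact hZpd (k+1))
        (fun j => by have := ih j; rwa [hZsucc k] at this) i
  have hZle : ∀ k k', k ≤ k' → ∀ i, pLE (Z k i) (Z k' i) := by
    intro k k' hkk'
    induction k', hkk' using Nat.le_induction with
    | base => intro i; exact pLE_refl _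
    | succ k'' hk ih => intro i; exact pLE_trans (ih i) (hZstep k'' i)
  -- the matrices T, W, E for the lower bound on the information matrices
  set T : Fin N → Matrix (Fin n) (Fin n) ℝ := fun j => ∑ p, ν j p • S p with hTdef
  set W : ℕ → Fin N → Matrix (Fin n) (Fin n) ℝ :=
    fun s i => ∑ j, ((L ^ s) i j) • T j with hWdef
  set E : ℕ → Fin N → Matrix (Fin n) (Fin n) ℝ :=
    fun m' i => ∑ s ∈ Finset.range m',
      gam ^ (s+1) • (Bm ^ (s+1) * W s i * (Bm ^ (s+1))ᵀ) with hEdef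
  have hTherm : ∀ j, (T j)ᵀ = T j := by
    intro j
    rw [hTdef]; dsimp only
    rw [transpose_sum]
    exact Finset.sum_congr rfl fun p _ => herm_smul _ (hSherm p)
  have hTpsd : ∀ j, (T j).PosSemidef := by
    intro j
    rw [hTdef]; dsimp only
    exact psd_finset_sum _ _ fun p _ => psd_smul (hSpsd p) (hνnonneg j p)
  have hLpownn : ∀ s i j, 0 ≤ (L ^ s) i j := by
    intro s
    induction s with
    | zero =>
      intro i j
      rw [pow_zero, Matrix.one_apply]
      split <;> norm_num
    | succ s ih =>
      intro i j
      rw [pow_succ', Matrix.mul_apply]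
      exact Finset.sum_nonneg fun q _ => mul_nonneg (hLnonneg i q) (ih q j)
  have hWherm : ∀ s i, (W s i)ᵀ = W s i := by
    intro s i
    rw [hWdef]; dsimp only
    rw [transpose_sum]
    exact Finset.sum_congr rfl fun j _ => herm_smul _ (hTherm j)
  have hWpsd : ∀ s i, (W s i).PosSemidef := by
    intro s i
    rw [hWdef]; dsimp only
    exact psd_finset_sum _ _ fun j _ => psd_smul (hTpsd j) (hLpownn s i j)
  have hMsplit : ∀ P i, Mf P i = (∑ j, L i j • (P j)⁻¹) + T i := by
    intro P i
    rw [hMdef, hTdef]; dsimp only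
    rw [Finset.sum_add_distrib]
  have hW0 : ∀ i, W 0 i = T i := by
    intro i
    rw [hWdef]; dsimp only
    simp [pow_zero, Matrix.one_apply, ite_smul, Finset.sum_ite_eq]
  have hWstep : ∀ s i, (∑ j, L i j • W s j) = W (s+1) i := by
    intro s i
    rw [hWdef]; dsimp only
    calc ∑ j, L i j • ∑ p, (L ^ s) j p • T p
        = ∑ j, ∑ p, (L i j * (L ^ s) j p) • T p := by
          refine Finset.sum_congr rfl fun j _ => ?_
          rw [Finset.smul_sum]
          exact Finset.sum_congr rfl fun p _ => (smul_smul _ _ _)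
      _ = ∑ p, ∑ j, (L i j * (L ^ s) j p) • T p := Finset.sum_comm
      _ = ∑ p, ((L ^ (s+1)) i p) • T p := by
          refine Finset.sum_congr rfl fun p _ => ?_
          rw [← Finset.sum_smul, pow_succ', Matrix.mul_apply]
  have hErec : ∀ m' i, E (m'+1) i
      = gam • (Bm * ((∑ j, L i j • E m' j) + T i) * Bmᵀ) := by
    intro m' i
    have e2 : (∑ j, L i j • E m' j)
        = ∑ s ∈ Finset.range m', gam ^ (s+1) • (Bm ^ (s+1) * W (s+1) i * (Bm ^ (s+1))ᵀ) := by
      have e1 : ∀ j, L i j • E m' j = ∑ s ∈ Finset.range m',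
          L i j • (gam ^ (s+1) • (Bm ^ (s+1) * W s j * (Bm ^ (s+1))ᵀ)) := by
        intro j
        rw [hEdef]; dsimp only
        rw [Finset.smul_sum]
      rw [Finset.sum_congr rfl fun j _ => e1 j, Finset.sum_comm]
      refine Finset.sum_congr rfl fun s _ => ?_
      calc ∑ j, L i j • gam ^ (s+1) • (Bm ^ (s+1) * W s j * (Bm ^ (s+1))ᵀ)
          = gam ^ (s+1) • ∑ j, L i j • (Bm ^ (s+1) * W s j * (Bm ^ (s+1))ᵀ) := by
            rw [Finset.smul_sum]
            exact Finset.sum_congr rfl fun j _ => smul_comm _ _ _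
        _ = gam ^ (s+1) • (Bm ^ (s+1) * (∑ j, L i j • W s j) * (Bm ^ (s+1))ᵀ) := by
            congr 1
            refine Eq.symm ?_
            rw [Matrix.mul_sum, Matrix.sum_mul]
            refine Finset.sum_congr rfl fun j _ => ?_
            rw [Matrix.mul_smul, Matrix.smul_mul]
        _ = gam ^ (s+1) • (Bm ^ (s+1) * W (s+1) i * (Bm ^ (s+1))ᵀ) := by rw [hWstep]
    have lhs : E (m'+1) i = (∑ s ∈ Finset.range m',
        gam ^ (s+1+1) • (Bm ^ (s+1+1) * W (s+1) i * (Bm ^ (s+1+1))ᵀ))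
        + gam ^ (0+1) • (Bm ^ (0+1) * W 0 i * (Bm ^ (0+1))ᵀ) := by
      rw [hEdef]; dsimp only
      exact Finset.sum_range_succ' _ m'
    rw [lhs, Matrix.mul_add, Matrix.add_mul, smul_add]
    congr 1
    · -- main terms
      rw [e2, Matrix.mul_sum, Matrix.sum_mul, Finset.smul_sum]
      refine Finset.sum_congr rfl fun s _ => ?_
      rw [Matrix.mul_smul, Matrix.smul_mul, smul_smul, ← pow_succ']
      congr 1
      rw [pow_succ' Bm (s+1), transpose_mul]
      simp only [Matrix.mul_assoc]
    · rw [hW0]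
      norm_num

  have hEbound : ∀ m' k i, pLE (E m' i) ((Z (k + m') i)⁻¹) := by
    intro m'
    induction m' with
    | zero =>
      intro k i
      have : E 0 i = 0 := by rw [hEdef]; dsimp only; rw [Finset.range_zero, Finset.sum_empty]
      rw [this, pLE_zero_iff]
      exact ((hZpd k i).inv).posSemidef
    | succ m' ih =>
      intro k i
      have h1 := hstar (Z (k + m')) (hZpd (k + m')) (hZgeQ (k + m')) i
      have h2 : pLE (E (m'+1) i) (gam • (Bm * Mf (Z (k + m')) i * Bmᵀ)) := by
        rw [hErec m' i, hMsplit]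
        refine pLE_smul (pLE_conj (pLE_add ?_ (pLE_refl (T i))) Bm) hgam.le
        exact pLE_sum _ _ _ fun j _ => pLE_smul (ih k j) (hLnonneg i j)
      have h3 : (Ff (Z (k + m')) i)⁻¹ = (Z (k + (m'+1)) i)⁻¹ := by
        rw [← Nat.add_assoc, hZsucc (k + m')]
      rw [h3] at h1
      exact pLE_trans h2 h1
  -- positivity of E (K + n) via collective observability and primitivity
  have hLpowpos : ∀ s, K ≤ s → ∀ i j, 0 < (L ^ s) i j := by
    intro s hs
    induction s, hs using Nat.le_induction with
    | base => exact hKL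
    | succ s hs ih =>
      intro i j
      rw [pow_succ', Matrix.mul_apply]
      obtain ⟨q, hq⟩ := hLrowpos i
      refine Finset.sum_pos' (fun q' _ => mul_nonneg (hLnonneg i q') (ih q' j).le)
        ⟨q, Finset.mem_univ q, mul_pos hq (ih q j)⟩
  have hνcol : ∀ p, ∃ j, 0 < ν j p := by
    intro p
    obtain ⟨kv, hkv, hkvpos⟩ := hνprim
    obtain ⟨kv', rfl⟩ := Nat.exists_eq_succ_of_ne_zero hkv.ne'
    by_contra h
    push_neg at h
    have hz : ∀ j, ν j p = 0 := fun j => le_antisymm (h j) (hνnonneg j p)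
    have := hkvpos p p
    rw [pow_succ, Matrix.mul_apply] at this
    have : (0:ℝ) < 0 := by
      have e : ∑ j, (ν ^ kv') p j * ν j p = 0 :=
        Finset.sum_eq_zero fun j _ => by rw [hz j, mul_zero]
      rwa [e] at this
    exact lt_irrefl _ this
  have hEherm : ∀ m' i, (E m' i)ᵀ = E m' i := by
    intro m' i
    rw [hEdef]; dsimp only
    rw [transpose_sum]
    exact Finset.sum_congr rfl fun s _ => herm_smul _ (conj_herm _ (hWherm s i))
  have hBmTpow : ∀ a, ((Bm ^ a)ᵀ : Matrix (Fin n) (Fin n) ℝ) = (A⁻¹) ^ a := by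
    intro a
    rw [transpose_pow, hBmT]
  have hEpd : ∀ i, (E (K + n) i).PosDef := by
    intro i
    refine posdef_of_forms (hEherm (K + n) i) fun x hx => ?_
    -- z s = (A⁻¹)^(s+1) *ᵥ x ; y = (A⁻¹)^(K+n) *ᵥ x
    set z : ℕ → Fin n → ℝ := fun s => ((A⁻¹) ^ (s+1)) *ᵥ x with hzdef
    set y : Fin n → ℝ := ((A⁻¹) ^ (K + n)) *ᵥ x with hydef
    have hy : y ≠ 0 := by
      intro h0
      apply hx
      have : (A ^ (K + n)) *ᵥ y = x := by
        rw [hydef, mulVec_mulVec, pow_mul_inv_pow hA, one_mulVec]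
      rw [← this, h0, mulVec_zero]
    have hform : x ⬝ᵥ E (K + n) i *ᵥ x
        = ∑ s ∈ Finset.range (K + n), gam ^ (s+1) * (z s ⬝ᵥ W s i *ᵥ z s) := by
      rw [hEdef]; dsimp only
      rw [form_sum]
      refine Finset.sum_congr rfl fun s _ => ?_
      rw [form_smul, form_conj, hBmTpow]
    have htermnn : ∀ s ∈ Finset.range (K + n),
        0 ≤ gam ^ (s+1) * (z s ⬝ᵥ W s i *ᵥ z s) := fun s _ =>
      mul_nonneg (pow_nonneg hgam.le _) (form_nonneg (hWpsd s i) (z s))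
    rcases lt_or_ge 0 (x ⬝ᵥ E (K + n) i *ᵥ x) with hpos | hle
    · exact hpos
    · exfalso
      have hzero : ∀ s ∈ Finset.range (K + n),
          gam ^ (s+1) * (z s ⬝ᵥ W s i *ᵥ z s) = 0 := by
        rw [hform] at hle
        have := Finset.sum_eq_zero_iff_of_nonneg htermnn
        exact this.1 (le_antisymm hle (Finset.sum_nonneg htermnn))
      have hCz : ∀ s, K ≤ s → s < K + n → ∀ p, C p *ᵥ z s = 0 := by
        intro s hKs hsKn p
        have h1 : z s ⬝ᵥ W s i *ᵥ z s = 0 := by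
          have := hzero s (Finset.mem_range.2 hsKn)
          have hgn : gam ^ (s+1) ≠ 0 := (pow_pos hgam _).ne'
          exact (mul_eq_zero.1 this).resolve_left hgn
        have h2 : ∀ j, z s ⬝ᵥ T j *ᵥ z s = 0 := by
          intro j
          have e : z s ⬝ᵥ W s i *ᵥ z s = ∑ j', (L ^ s) i j' * (z s ⬝ᵥ T j' *ᵥ z s) := by
            rw [hWdef]; dsimp only
            rw [form_sum]
            exact Finset.sum_congr rfl fun j' _ => form_smul _ _ _
          rw [e] at h1
          have hnn : ∀ j' ∈ Finset.univ, 0 ≤ (L ^ s) i j' * (z s ⬝ᵥ T j' *ᵥ z s) :=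
            fun j' _ => mul_nonneg (hLpownn s i j') (form_nonneg (hTpsd j') (z s))
          have := (Finset.sum_eq_zero_iff_of_nonneg hnn).1 h1 j (Finset.mem_univ j)
          exact (mul_eq_zero.1 this).resolve_left (hLpowpos s hKs i j).ne'
        obtain ⟨j, hj⟩ := hνcol p
        have h3 : z s ⬝ᵥ S p *ᵥ z s = 0 := by
          have e : z s ⬝ᵥ T j *ᵥ z s = ∑ p', ν j p' * (z s ⬝ᵥ S p' *ᵥ z s) := by
            rw [hTdef]; dsimp only
            rw [form_sum]
            exact Finset.sum_congr rfl fun p' _ => form_smul _ _ _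
          have hnn : ∀ p' ∈ Finset.univ, 0 ≤ ν j p' * (z s ⬝ᵥ S p' *ᵥ z s) :=
            fun p' _ => mul_nonneg (hνnonneg j p') (form_nonneg (hSpsd p') (z s))
          have h4 := (Finset.sum_eq_zero_iff_of_nonneg hnn).1 (by rw [← e, h2 j]) p
            (Finset.mem_univ p)
          exact (mul_eq_zero.1 h4).resolve_left hj.ne'
        by_contra hne
        have : 0 < z s ⬝ᵥ S p *ᵥ z s := by
          rw [hSdef]; dsimp only
          rw [form_conj']
          exact form_pos (hRinv p) hne
        rw [h3] at this
        exact lt_irrefl _ this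
      -- contradiction with observability
      have hAty : ∀ t, t < n → (A ^ t) *ᵥ y = z (K + (n - 1 - t)) := by
        intro t ht
        have harith : K + n = t + (K + (n - 1 - t) + 1) := by omega
        have e : A ^ t * (A⁻¹) ^ (K + n) = (A⁻¹) ^ (K + (n - 1 - t) + 1) := by
          calc A ^ t * (A⁻¹) ^ (K + n)
              = A ^ t * ((A⁻¹) ^ t * (A⁻¹) ^ (K + (n - 1 - t) + 1)) := by
                rw [← pow_add, ← harith]
            _ = (A ^ t * (A⁻¹) ^ t) * (A⁻¹) ^ (K + (n - 1 - t) + 1) := by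
                rw [Matrix.mul_assoc]
            _ = (A⁻¹) ^ (K + (n - 1 - t) + 1) := by
                rw [pow_mul_inv_pow hA, Matrix.one_mul]
        show (A ^ t) *ᵥ y = ((A⁻¹) ^ (K + (n - 1 - t) + 1)) *ᵥ x
        rw [hydef, mulVec_mulVec, e]
      have hobsform : y ⬝ᵥ (∑ k ∈ Finset.range n,
          (A ^ k)ᵀ * (∑ i', (C i')ᵀ * C i') * A ^ k) *ᵥ y = 0 := by
        rw [form_sum]
        refine Finset.sum_eq_zero fun t ht => ?_
        rw [form_conj', hAty t (Finset.mem_range.1 ht), form_sum]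
        refine Finset.sum_eq_zero fun p _ => ?_
        rw [form_CtC, hCz (K + (n - 1 - t)) (by omega)
          (by have := Finset.mem_range.1 ht; omega) p, dotProduct_zero]
      have := form_pos hObs hy
      rw [hobsform] at this
      exact lt_irrefl _ this

  -- uniform bound on the iterates Z, hence convergence to a fixed point Pm
  have hZbound : ∀ i, ∃ b : ℝ, ∀ k x, x ⬝ᵥ Z k i *ᵥ x ≤ b * (x ⬝ᵥ x) := by
    intro i
    obtain ⟨e, he, hlbE⟩ := exists_lb (hEpd i)
    have hub : ∀ k, K + n ≤ k → pLE (Z k i) (e⁻¹ • 1) := by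
      intro k hk
      obtain ⟨k', rfl⟩ := Nat.exists_eq_add_of_le hk
      have h1 : pLE (E (K + n) i) ((Z (k' + (K + n)) i)⁻¹) := hEbound (K + n) k' i
      have h2 : pLE (e • 1) ((Z (k' + (K + n)) i)⁻¹) := pLE_trans hlbE h1
      have h3 := inv_antitone (posdef_smul_one he) ((hZpd _ i).inv) h2
      rw [smul_one_inv he.ne', nonsing_inv_nonsing_inv _ (pd_detUnit (hZpd _ i))] at h3
      rw [Nat.add_comm (K + n) k']
      exact h3
    refine ⟨e⁻¹, fun k x => ?_⟩
    have h4 : pLE (Z k i) (e⁻¹ • 1) :=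
      pLE_trans (hZle k (max k (K + n)) (le_max_left _ _) i) (hub _ (le_max_right _ _))
    have := pLE_form h4 x
    rwa [form_smul_one] at this
  have hlim : ∀ i, ∃ Pmi : Matrix (Fin n) (Fin n) ℝ, Pmiᵀ = Pmi ∧
      Tendsto (fun k => Z k i) atTop (𝓝 Pmi) ∧ ∀ k, pLE (Z k i) Pmi := by
    intro i
    obtain ⟨b, hb⟩ := hZbound i
    exact exists_tendsto_of_monotone (fun k => hZherm k i) (fun k => hZstep k i)
      (fun x => ⟨b * (x ⬝ᵥ x), fun k => hb k x⟩)
  choose Pm hPmherm hPmtend hPmle using hlim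
  have hPmgeQ : ∀ i, pLE Q (Pm i) := fun i => hPmle i 0
  have hPmpd : ∀ i, (Pm i).PosDef := fun i => posdef_of_pLE hQ (hPmherm i) (hPmgeQ i)
  have hinvtend : ∀ (Wseq : ℕ → Matrix (Fin n) (Fin n) ℝ) (X : Matrix (Fin n) (Fin n) ℝ),
      X.PosDef → Tendsto Wseq atTop (𝓝 X) →
      Tendsto (fun k => (Wseq k)⁻¹) atTop (𝓝 X⁻¹) := by
    intro Wseq X hX hW
    have hdet : ContinuousAt Ring.inverse (X.det) := by
      have e : (Ring.inverse : ℝ → ℝ) = fun a => a⁻¹ := funext fun a => Ring.inverse_eq_inv a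
      rw [e]
      exact continuousAt_inv₀ hX.det_pos.ne'
    exact (continuousAt_matrix_inv X hdet).tendsto.comp hW
  have hFtend : ∀ (Y : ℕ → Fin N → Matrix (Fin n) (Fin n) ℝ)
      (Plim : Fin N → Matrix (Fin n) (Fin n) ℝ), (∀ j, (Plim j).PosDef) →
      (∀ j, Tendsto (fun k => Y k j) atTop (𝓝 (Plim j))) →
      ∀ i, Tendsto (fun k => Ff (Y k) i) atTop (𝓝 (Ff Plim i)) := by
    intro Y Plim hPl hYt i
    have hMt : Tendsto (fun k => Mf (Y k) i) atTop (𝓝 (Mf Plim i)) := by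
      rw [hMdef]; dsimp only
      refine tendsto_finset_sum _ fun j _ => ?_
      exact ((hinvtend (fun k => Y k j) (Plim j) (hPl j) (hYt j)).const_smul
        (L i j)).add tendsto_const_nhds
    have hMinvt := hinvtend _ _ (hMpd Plim hPl i) hMt
    have hc : Continuous (fun X : Matrix (Fin n) (Fin n) ℝ => A * X * Aᵀ + Q) :=
      ((continuous_const.matrix_mul continuous_id).matrix_mul continuous_const).add
        continuous_const
    have := (hc.tendsto ((Mf Plim i)⁻¹)).comp hMinvt
    rw [hFdef]; dsimp only
    exact this
  have hfix : ∀ i, Pm i = Ff Pm i := by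
    intro i
    have h1 : Tendsto (fun k => Z (k+1) i) atTop (𝓝 (Pm i)) :=
      (hPmtend i).comp (tendsto_add_atTop_nat 1)
    have h2 := hFtend Z Pm hPmpd hPmtend i
    have h3 : (fun k => Z (k+1) i) = fun k => Ff (Z k) i := funext fun k => by rw [hZsucc k]
    rw [h3] at h1
    exact tendsto_nhds_unique h1 h2

  -- constants for the sandwich / contraction argument
  obtain ⟨rho, hrho1, hrhoB⟩ : ∃ rho : ℝ, 1 ≤ rho ∧ ∀ i, pLE (Pm i) (rho • Q) := by
    have h : ∀ i, ∃ t : ℝ, 0 < t ∧ pLE (Pm i) (t • Q) := fun i => exists_smul_pLE (hPmpd i) hQ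
    choose t ht htle using h
    have hsnn : 0 ≤ ∑ i, t i := Finset.sum_nonneg fun i _ => (ht i).le
    refine ⟨1 + ∑ i, t i, by linarith, fun i => ?_⟩
    refine pLE_trans (htle i) (pLE_smul_scalar hQ.posSemidef ?_)
    have : t i ≤ ∑ j, t j := Finset.single_le_sum (fun j _ => (ht j).le) (Finset.mem_univ i)
    linarith
  have hrhopos : 0 < rho := lt_of_lt_of_le one_pos hrho1
  set c : ℝ := 1 - rho⁻¹ with hcdef
  have hc0 : 0 ≤ c := by
    rw [hcdef]
    have : rho⁻¹ ≤ 1 := inv_le_one_of_one_le₀ hrho1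
    linarith
  have hc1 : c < 1 := by
    rw [hcdef]
    have : 0 < rho⁻¹ := inv_pos.2 hrhopos
    linarith
  have h1c : 1 - c = rho⁻¹ := by rw [hcdef]; ring
  have hcP : ∀ i, pLE ((1 - c) • Pm i) Q := by
    intro i
    rw [h1c]
    have h1 := pLE_smul (hrhoB i) (inv_pos.2 hrhopos).le
    have e : rho⁻¹ • (rho • Q) = Q := by
      rw [smul_smul, inv_mul_cancel₀ hrhopos.ne', one_smul]
    rwa [e] at h1
  -- one-step sandwich estimates at the fixed point
  have hU : ∀ lam : ℝ, 1 ≤ lam → ∀ i,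
      pLE (Ff (fun j => lam • Pm j) i) ((1 + c * (lam - 1)) • Pm i) := by
    intro lam hlam i
    have hlampos : 0 < lam := lt_of_lt_of_le one_pos hlam
    have hlamPd : ∀ j, ((lam • Pm j : Matrix (Fin n) (Fin n) ℝ)).PosDef :=
      fun j => posdef_smul (hPmpd j) hlampos
    have hM1 : pLE (lam⁻¹ • Mf Pm i) (Mf (fun j => lam • Pm j) i) := by
      rw [hMdef]; dsimp only
      rw [Finset.smul_sum]
      refine pLE_sum _ _ _ fun j _ => ?_
      rw [smul_add]
      refine pLE_add ?_ ?_
      · have e : ((lam • Pm j : Matrix (Fin n) (Fin n) ℝ))⁻¹ = lam⁻¹ • (Pm j)⁻¹ :=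
          smul_inv_eq hlampos.ne' (pd_detUnit (hPmpd j))
        rw [e, smul_comm (L i j) lam⁻¹]
        exact pLE_refl _
      · have h2 := pLE_smul_scalar (psd_smul (hSpsd j) (hνnonneg i j))
          (show lam⁻¹ ≤ 1 from inv_le_one_of_one_le₀ hlam)
        rwa [one_smul] at h2
    have hM1pd : ((lam⁻¹ • Mf Pm i : Matrix (Fin n) (Fin n) ℝ)).PosDef :=
      posdef_smul (hMpd Pm hPmpd i) (inv_pos.2 hlampos)
    have hinv := inv_antitone hM1pd (hMpd _ hlamPd i) hM1
    have e2 : ((lam⁻¹ • Mf Pm i : Matrix (Fin n) (Fin n) ℝ))⁻¹ = lam • (Mf Pm i)⁻¹ := by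
      rw [smul_inv_eq (inv_ne_zero hlampos.ne') (pd_detUnit (hMpd Pm hPmpd i)), inv_inv]
    rw [e2] at hinv
    have hconj := pLE_conj hinv A
    have e3 : A * (lam • (Mf Pm i)⁻¹) * Aᵀ = lam • (A * (Mf Pm i)⁻¹ * Aᵀ) := by
      rw [Matrix.mul_smul, Matrix.smul_mul]
    rw [e3] at hconj
    have h5 : pLE (Ff (fun j => lam • Pm j) i) (lam • (A * (Mf Pm i)⁻¹ * Aᵀ) + Q) := by
      rw [hFdef]; dsimp only
      exact pLE_add hconj (pLE_refl Q)
    have hPQ : A * (Mf Pm i)⁻¹ * Aᵀ = Pm i - Q := by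
      have hfx := hfix i
      rw [hFdef] at hfx; dsimp only at hfx
      exact eq_sub_of_add_eq hfx.symm
    rw [hPQ] at h5
    refine pLE_trans h5 ?_
    show ((1 + c * (lam - 1)) • Pm i - (lam • (Pm i - Q) + Q)).PosSemidef
    have e4 : (1 + c * (lam - 1)) • Pm i - (lam • (Pm i - Q) + Q)
        = (lam - 1) • (Q - (1 - c) • Pm i) := by module
    rw [e4]
    exact psd_smul (hcP i) (by linarith)
  have hLo : ∀ lam : ℝ, 1 ≤ lam → ∀ i,
      pLE ((1 + c * (lam - 1))⁻¹ • Pm i) (Ff (fun j => lam⁻¹ • Pm j) i) := by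
    intro lam hlam i
    have hlampos : 0 < lam := lt_of_lt_of_le one_pos hlam
    have hlinv : (0:ℝ) < lam⁻¹ := inv_pos.2 hlampos
    have hlamPd : ∀ j, ((lam⁻¹ • Pm j : Matrix (Fin n) (Fin n) ℝ)).PosDef :=
      fun j => posdef_smul (hPmpd j) hlinv
    set mu : ℝ := 1 + c * (lam - 1) with hmudef
    have hmu1 : 1 ≤ mu := by rw [hmudef]; nlinarith
    have hmupos : 0 < mu := lt_of_lt_of_le one_pos hmu1
    have hM1 : pLE (Mf (fun j => lam⁻¹ • Pm j) i) (lam • Mf Pm i) := by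
      rw [hMdef]; dsimp only
      rw [Finset.smul_sum]
      refine pLE_sum _ _ _ fun j _ => ?_
      rw [smul_add]
      refine pLE_add ?_ ?_
      · have e : ((lam⁻¹ • Pm j : Matrix (Fin n) (Fin n) ℝ))⁻¹ = lam • (Pm j)⁻¹ := by
          rw [smul_inv_eq (inv_ne_zero hlampos.ne') (pd_detUnit (hPmpd j)), inv_inv]
        rw [e, smul_comm (L i j) lam]
        exact pLE_refl _
      · have h2 := pLE_smul_scalar (psd_smul (hSpsd j) (hνnonneg i j)) hlam
        rwa [one_smul] at h2
    have hM2pd : ((lam • Mf Pm i : Matrix (Fin n) (Fin n) ℝ)).PosDef :=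
      posdef_smul (hMpd Pm hPmpd i) hlampos
    have hinv := inv_antitone (hMpd _ hlamPd i) hM2pd hM1
    have e2 : ((lam • Mf Pm i : Matrix (Fin n) (Fin n) ℝ))⁻¹ = lam⁻¹ • (Mf Pm i)⁻¹ := by
      rw [smul_inv_eq hlampos.ne' (pd_detUnit (hMpd Pm hPmpd i))]
    rw [e2] at hinv
    have hconj := pLE_conj hinv A
    have e3 : A * (lam⁻¹ • (Mf Pm i)⁻¹) * Aᵀ = lam⁻¹ • (A * (Mf Pm i)⁻¹ * Aᵀ) := by
      rw [Matrix.mul_smul, Matrix.smul_mul]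
    rw [e3] at hconj
    have h5 : pLE (lam⁻¹ • (A * (Mf Pm i)⁻¹ * Aᵀ) + Q) (Ff (fun j => lam⁻¹ • Pm j) i) := by
      rw [hFdef]; dsimp only
      exact pLE_add hconj (pLE_refl Q)
    have hPQ : A * (Mf Pm i)⁻¹ * Aᵀ = Pm i - Q := by
      have hfx := hfix i
      rw [hFdef] at hfx; dsimp only at hfx
      exact eq_sub_of_add_eq hfx.symm
    rw [hPQ] at h5
    refine pLE_trans ?_ h5
    -- scalar inequality
    have hmulam : mu ≤ lam := by rw [hmudef]; nlinarith
    have hsnn : 0 ≤ mu⁻¹ - lam⁻¹ := by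
      have h1 : lam⁻¹ ≤ mu⁻¹ := by
        apply inv_anti₀ hmupos hmulam
      linarith
    have hrc : rho * (1 - c) = 1 := by rw [h1c]; field_simp
    have key : (mu⁻¹ - lam⁻¹) * rho ≤ 1 - lam⁻¹ := by
      have hmui : mu * mu⁻¹ = 1 := mul_inv_cancel₀ hmupos.ne'
      have hlami : lam * lam⁻¹ = 1 := mul_inv_cancel₀ hlampos.ne'
      have e1 : mu⁻¹ - lam⁻¹ = (lam - mu) * (lam⁻¹ * mu⁻¹) := by
        have e : (lam - mu) * (lam⁻¹ * mu⁻¹) = (lam * lam⁻¹) * mu⁻¹ - (mu * mu⁻¹) * lam⁻¹ := by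
          ring
        rw [e, hmui, hlami]; ring
      have key2 : (lam - mu) * rho = lam - 1 := by
        have hlm : lam - mu = (1 - c) * (lam - 1) := by rw [hmudef]; ring
        rw [hlm]
        calc (1 - c) * (lam - 1) * rho = rho * (1 - c) * (lam - 1) := by ring
          _ = lam - 1 := by rw [hrc, one_mul]
      have e3 : (mu⁻¹ - lam⁻¹) * rho = (lam - 1) * (lam⁻¹ * mu⁻¹) := by
        rw [e1]
        calc (lam - mu) * (lam⁻¹ * mu⁻¹) * rho = ((lam - mu) * rho) * (lam⁻¹ * mu⁻¹) := by ring
          _ = (lam - 1) * (lam⁻¹ * mu⁻¹) := by rw [key2]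
      have e4 : (1:ℝ) - lam⁻¹ = (lam - 1) * lam⁻¹ := by
        have e : (lam - 1) * lam⁻¹ = lam * lam⁻¹ - lam⁻¹ := by ring
        rw [e, hlami]
      rw [e3, e4]
      have hmuinv1 : mu⁻¹ ≤ 1 := inv_le_one_of_one_le₀ hmu1
      have h9 : 0 ≤ (lam - 1) * lam⁻¹ := mul_nonneg (by linarith) (inv_pos.2 hlampos).le
      calc (lam - 1) * (lam⁻¹ * mu⁻¹) = ((lam - 1) * lam⁻¹) * mu⁻¹ := by ring
        _ ≤ ((lam - 1) * lam⁻¹) * 1 := mul_le_mul_of_nonneg_left hmuinv1 h9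
        _ = (lam - 1) * lam⁻¹ := mul_one _
    have hs' : pLE ((mu⁻¹ - lam⁻¹) • Pm i) ((1 - lam⁻¹) • Q) := by
      refine pLE_trans (pLE_smul (hrhoB i) hsnn) ?_
      have e5 : (mu⁻¹ - lam⁻¹) • (rho • Q) = ((mu⁻¹ - lam⁻¹) * rho) • Q := by rw [smul_smul]
      rw [e5]
      exact pLE_smul_scalar hQ.posSemidef key
    have e6 : mu⁻¹ • Pm i = lam⁻¹ • Pm i + (mu⁻¹ - lam⁻¹) • Pm i := by module
    have e7 : lam⁻¹ • (Pm i - Q) + Q = lam⁻¹ • Pm i + (1 - lam⁻¹) • Q := by module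
    show pLE (mu⁻¹ • Pm i) (lam⁻¹ • (Pm i - Q) + Q)
    rw [e6, e7]
    exact pLE_add (pLE_refl _) hs'

  -- convergence from an arbitrary positive definite start
  have hconv : ∀ P0 : Fin N → Matrix (Fin n) (Fin n) ℝ, (∀ i, (P0 i).PosDef) →
      ∀ Pseq : ℕ → Fin N → Matrix (Fin n) (Fin n) ℝ, Pseq 0 = P0 →
      (∀ k i, Pseq (k+1) i = Ff (Pseq k) i) →
      ∀ i, Tendsto (fun k => Pseq k i) atTop (𝓝 (Pm i)) := by
    intro P0 hP0 Pseq hPseq0 hPseqrec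
    have h : ∀ i, ∃ t : ℝ, 0 < t ∧ pLE (P0 i) (t • Pm i) :=
      fun i => exists_smul_pLE (hP0 i) (hPmpd i)
    have h' : ∀ i, ∃ t : ℝ, 0 < t ∧ pLE (Pm i) (t • P0 i) :=
      fun i => exists_smul_pLE (hPmpd i) (hP0 i)
    choose t ht htle using h
    choose u hu hule using h'
    have htnn : 0 ≤ ∑ i, t i := Finset.sum_nonneg fun i _ => (ht i).le
    have hunn : 0 ≤ ∑ i, u i := Finset.sum_nonneg fun i _ => (hu i).le
    set lam0 : ℝ := 1 + (∑ i, t i) + (∑ i, u i) with hlam0def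
    have hlam01 : 1 ≤ lam0 := by rw [hlam0def]; linarith
    have hlam0pos : 0 < lam0 := lt_of_lt_of_le one_pos hlam01
    have hup0 : ∀ i, pLE (P0 i) (lam0 • Pm i) := by
      intro i
      refine pLE_trans (htle i) (pLE_smul_scalar (hPmpd i).posSemidef ?_)
      have : t i ≤ ∑ j, t j := Finset.single_le_sum (fun j _ => (ht j).le) (Finset.mem_univ i)
      rw [hlam0def]; linarith
    have hlow0 : ∀ i, pLE (lam0⁻¹ • Pm i) (P0 i) := by
      intro i
      have h1 : pLE (Pm i) (lam0 • P0 i) := by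
        refine pLE_trans (hule i) (pLE_smul_scalar (hP0 i).posSemidef ?_)
        have : u i ≤ ∑ j, u j := Finset.single_le_sum (fun j _ => (hu j).le) (Finset.mem_univ i)
        rw [hlam0def]; linarith
      have h2 := pLE_smul h1 (inv_pos.2 hlam0pos).le
      rwa [smul_smul, inv_mul_cancel₀ hlam0pos.ne', one_smul] at h2
    set lamseq : ℕ → ℝ := fun k => 1 + c ^ k * (lam0 - 1) with hlamseqdef
    have hlamge1 : ∀ k, 1 ≤ lamseq k := by
      intro k
      rw [hlamseqdef]; dsimp only
      nlinarith [pow_nonneg hc0 k]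
    have hlamrec : ∀ k, 1 + c * (lamseq k - 1) = lamseq (k+1) := by
      intro k
      rw [hlamseqdef]; dsimp only
      rw [pow_succ]
      ring
    have hsand : ∀ k, (∀ i, (Pseq k i).PosDef) ∧
        (∀ i, pLE (Pseq k i) (lamseq k • Pm i) ∧ pLE ((lamseq k)⁻¹ • Pm i) (Pseq k i)) := by
      intro k
      induction k with
      | zero =>
        have e0 : lamseq 0 = lam0 := by rw [hlamseqdef]; dsimp only; rw [pow_zero]; ring
        constructor
        · intro i; rw [hPseq0]; exact hP0 i
        · intro i
          rw [hPseq0, e0]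
          exact ⟨hup0 i, hlow0 i⟩
      | succ k ih =>
        obtain ⟨ihpd, ihs⟩ := ih
        constructor
        · intro i; rw [hPseqrec k i]; exact hFpd _ ihpd i
        · intro i
          constructor
          · rw [hPseqrec k i]
            have h1 := hFmono (Pseq k) (fun j => lamseq k • Pm j) ihpd
              (fun j => posdef_smul (hPmpd j) (lt_of_lt_of_le one_pos (hlamge1 k)))
              (fun j => (ihs j).1) i
            have h2 := hU (lamseq k) (hlamge1 k) i
            rw [hlamrec k] at h2
            exact pLE_trans h1 h2
          · rw [hPseqrec k i]
            have h1 := hFmono (fun j => (lamseq k)⁻¹ • Pm j) (Pseq k)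
              (fun j => posdef_smul (hPmpd j)
                (inv_pos.2 (lt_of_lt_of_le one_pos (hlamge1 k)))) ihpd
              (fun j => (ihs j).2) i
            have h2 := hLo (lamseq k) (hlamge1 k) i
            rw [hlamrec k] at h2
            exact pLE_trans h2 h1
    have hlamt : Tendsto lamseq atTop (𝓝 1) := by
      have h0 : Tendsto (fun k : ℕ => c ^ k) atTop (𝓝 0) :=
        tendsto_pow_atTop_nhds_zero_of_lt_one hc0 hc1
      have h1 := (h0.mul_const (lam0 - 1)).const_add 1
      rw [hlamseqdef]
      simpa using h1
    have hPseqherm : ∀ k i, (Pseq k i)ᵀ = Pseq k i := by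
      intro k
      induction k with
      | zero => intro i; rw [hPseq0]; exact herm_iff.1 (hP0 i).1
      | succ k ih =>
        intro i
        rw [hPseqrec k i]
        exact hFherm _ (hsand k).1 i
    intro i
    refine tendsto_of_forms (fun k => hPseqherm k i) (hPmherm i) fun x => ?_
    have hlb : ∀ k, (lamseq k)⁻¹ * (x ⬝ᵥ Pm i *ᵥ x) ≤ x ⬝ᵥ Pseq k i *ᵥ x := by
      intro k
      have := pLE_form ((hsand k).2 i).2 x
      rwa [form_smul] at this
    have hub : ∀ k, x ⬝ᵥ Pseq k i *ᵥ x ≤ lamseq k * (x ⬝ᵥ Pm i *ᵥ x) := by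
      intro k
      have := pLE_form ((hsand k).2 i).1 x
      rwa [form_smul] at this
    have hlbt : Tendsto (fun k => (lamseq k)⁻¹ * (x ⬝ᵥ Pm i *ᵥ x)) atTop
        (𝓝 (x ⬝ᵥ Pm i *ᵥ x)) := by
      have := (hlamt.inv₀ one_ne_zero).mul_const (x ⬝ᵥ Pm i *ᵥ x)
      simpa using this
    have hubt : Tendsto (fun k => lamseq k * (x ⬝ᵥ Pm i *ᵥ x)) atTop
        (𝓝 (x ⬝ᵥ Pm i *ᵥ x)) := by
      have := hlamt.mul_const (x ⬝ᵥ Pm i *ᵥ x)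
      simpa using this
    exact tendsto_of_tendsto_of_tendsto_of_le_of_le hlbt hubt hlb hub
  -- assemble the final statement
  refine ⟨Pm, hPmpd, ?_, ?_, ?_⟩
  · intro i
    have hfx := hfix i
    simp only [hFdef, hMdef] at hfx
    exact hfx
  · intro P' hP'pd hP'fix
    have hrec : ∀ k i, (fun _ : ℕ => P') (k+1) i = Ff ((fun _ : ℕ => P') k) i := by
      intro k i
      simp only [hFdef, hMdef]
      exact hP'fix i
    have hcv := hconv P' hP'pd (fun _ => P') rfl hrec
    funext i
    exact tendsto_nhds_unique tendsto_const_nhds (hcv i)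
  · intro P0 hP0 Pseq h0 hrec i
    refine hconv P0 hP0 Pseq h0 (fun k i => ?_) i
    simp only [hFdef, hMdef]
    exact hrec k i






end Main
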